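/- Let k ∈ ℤ, A ≥ 0, C > 0, and let (a_n)_{n≥1} be complex numbers with |a_n| ≤ C·n^A for all n. Define f(z) = Σ_{n=1}^∞ a_n e(nz) for z in the upper half plane. Let T > 0, α = −1 + i/T, and let s ∈ ℂ with Re(s) + (k−1)/2 > A + 2. Then the integral ∫_0^∞ f(αt) t^{s+(k−1)/2−1} dt and the series Σ_{n=1}^∞ a_n n^{−s−(k−1)/2} converge absolutely, and ∫_0^∞ f(αt) t^{s+(k−1)/2−1} dt = (2π)^{−(s+(k−1)/2)} · (−αi)^{−(s+(k−1)/2)} · Γ(s+(k−1)/2) · Σ_{n=1}^∞ a_n n^{−s−(k−1)/2}, where −αi = 1/T + i and complex powers are taken with the principal branch of the logarithm. -/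

import Mathlib

open Real MeasureTheory Set Filter Metric
open scoped Topology

lemma st8_real_int {u c : ℝ} (hu : 0 < u) (hc : 0 < c) :
    IntegrableOn (fun t : ℝ => t ^ (u - 1) * Real.exp (-(c * t))) (Set.Ioi 0) := by
  have h := Real.GammaIntegral_convergent hu
  rw [← mul_zero c, ← integrableOn_Ioi_comp_mul_left_iff _ _ hc] at h
  have h2 := h.const_mul (c ^ (1 - u))
  refine (IntegrableOn.congr_fun h2 (fun t ht => ?_) measurableSet_Ioi)
  have ht' : (0:ℝ) < t := ht
  rw [Real.mul_rpow hc.le ht'.le, show c ^ (1-u) * (rexp (-(c*t)) * (c ^ (u-1) * t ^ (u-1)))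
    = (c ^ (1-u) * c ^ (u-1)) * (t ^ (u-1) * rexp (-(c*t))) by ring, ← Real.rpow_add hc]
  norm_num

lemma st8_real_mul_cpow {r : ℝ} (hr : 0 < r) {z : ℂ} (hz : z ≠ 0) (w : ℂ) :
    ((r : ℂ) * z) ^ w = (r : ℂ) ^ w * z ^ w := by
  have hr' : (r : ℂ) ≠ 0 := Complex.ofReal_ne_zero.mpr hr.ne'
  rw [Complex.cpow_def_of_ne_zero (mul_ne_zero hr' hz),
    Complex.log_ofReal_mul hr hz, add_mul, Complex.exp_add,
    Complex.cpow_def_of_ne_zero hz, Complex.cpow_def_of_ne_zero hr',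
    Complex.ofReal_log hr.le]

lemma st8_norm_eq {w b : ℂ} {t : ℝ} (ht : 0 < t) :
    ‖(t:ℂ) ^ (w - 1) * Complex.exp (-(b * t))‖ = t ^ (w.re - 1) * Real.exp (-(b.re * t)) := by
  rw [norm_mul, Complex.norm_exp,
    Complex.norm_cpow_eq_rpow_re_of_pos ht]
  simp [Complex.sub_re, Complex.one_re, Complex.neg_re, Complex.mul_re, Complex.ofReal_re,
    Complex.ofReal_im]

lemma st8_cplx_int {w : ℂ} (hw : 0 < w.re) {b : ℂ} (hb : 0 < b.re) :
    IntegrableOn (fun t : ℝ => (t:ℂ) ^ (w - 1) * Complex.exp (-(b * t))) (Set.Ioi 0) := by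
  have hmeas : AEStronglyMeasurable (fun t : ℝ => (t:ℂ) ^ (w - 1) * Complex.exp (-(b * t)))
      ((volume : Measure ℝ).restrict (Set.Ioi 0)) := by
    apply ContinuousOn.aestronglyMeasurable ?_ measurableSet_Ioi
    apply ContinuousOn.mul
    · apply continuousOn_of_forall_continuousAt
      intro x hx
      exact (continuousAt_cpow_const (Complex.ofReal_mem_slitPlane.2 hx)).comp
        Complex.continuous_ofReal.continuousAt
    · exact (Complex.continuous_exp.comp (by continuity)).continuousOn
  refine ⟨hmeas, HasFiniteIntegral.congr' (st8_real_int hw hb).2 ?_⟩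
  apply (ae_restrict_iff' measurableSet_Ioi).mpr
  filter_upwards with t ht
  have ht' : (0:ℝ) < t := ht
  rw [Real.norm_eq_abs, abs_of_nonneg (by positivity), st8_norm_eq ht']

lemma st8_meas (w x : ℂ) : AEStronglyMeasurable (fun t : ℝ => (t:ℂ) ^ (w - 1) * Complex.exp (-(x * t)))
    ((volume : Measure ℝ).restrict (Set.Ioi 0)) := by
  apply ContinuousOn.aestronglyMeasurable ?_ measurableSet_Ioi
  apply ContinuousOn.mul
  · apply continuousOn_of_forall_continuousAt
    intro t ht
    exact (continuousAt_cpow_const (Complex.ofReal_mem_slitPlane.2 ht)).comp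
      Complex.continuous_ofReal.continuousAt
  · exact (Complex.continuous_exp.comp (by continuity)).continuousOn

set_option maxHeartbeats 1000000 in
lemma st8_keyval {w : ℂ} (hw : 0 < w.re) {b : ℂ} (hb : 0 < b.re) :
    ∫ t in Set.Ioi (0:ℝ), (t:ℂ) ^ (w - 1) * Complex.exp (-(b * t))
      = b ^ (-w) * Complex.Gamma w := by
  set U : Set ℂ := {z : ℂ | 0 < z.re} with hUdef
  have hUo : IsOpen U := isOpen_lt continuous_const Complex.continuous_re
  have hUc : IsPreconnected U := (convex_halfSpace_re_gt 0).isPreconnected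
  set G : ℂ → ℂ := fun z => z ^ (-w) * Complex.Gamma w with hGdef
  set F : ℂ → ℂ := fun z => ∫ t in Set.Ioi (0:ℝ), (t:ℂ) ^ (w - 1) * Complex.exp (-(z * t))
    with hFdef
  have hGa : AnalyticOnNhd ℂ G U := by
    apply DifferentiableOn.analyticOnNhd ?_ hUo
    intro z hz
    apply DifferentiableAt.differentiableWithinAt
    apply DifferentiableAt.mul_const
    exact ((hasDerivAt_id z).cpow_const (Or.inl hz)).differentiableAt
  have hFa : AnalyticOnNhd ℂ F U := by
    apply DifferentiableOn.analyticOnNhd ?_ hUo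
    intro z₀ hz₀
    apply DifferentiableAt.differentiableWithinAt
    have hz₀' : (0:ℝ) < z₀.re := hz₀
    set ε : ℝ := z₀.re / 2 with hε
    have hεpos : 0 < ε := by positivity
    have key := hasDerivAt_integral_of_dominated_loc_of_deriv_le
      (μ := (volume : Measure ℝ).restrict (Set.Ioi 0))
      (F := fun z t => (t:ℂ) ^ (w - 1) * Complex.exp (-(z * t)))
      (F' := fun z t => ((t:ℂ) ^ (w - 1) * Complex.exp (-(z * t))) * (-(t:ℂ)))
      (x₀ := z₀)
      (bound := fun t => t ^ ((w.re + 1) - 1) * Real.exp (-(ε * t)))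
      (Metric.ball_mem_nhds z₀ hεpos)
      (Filter.Eventually.of_forall fun x => st8_meas w x)
      (st8_cplx_int hw hz₀')
      ((st8_meas w z₀).mul (Continuous.aestronglyMeasurable (by continuity)))
      ?_ ?_ ?_
    · exact ⟨_, key.2⟩
    · -- bound
      apply (ae_restrict_iff' measurableSet_Ioi).mpr
      filter_upwards with t ht
      intro x hx
      have ht' : (0:ℝ) < t := ht
      have hxre : ε ≤ x.re := by
        have h1 : |x.re - z₀.re| ≤ ‖x - z₀‖ := by
          simpa using Complex.abs_re_le_norm (x - z₀)
        have h2 : ‖x - z₀‖ < ε := by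
          simpa [Metric.mem_ball, Complex.dist_eq] using hx
        have := (abs_le.mp h1).1
        simp only [hε] at *
        linarith
      have hnorm : ‖((t:ℂ) ^ (w - 1) * Complex.exp (-(x * t))) * (-(t:ℂ))‖
          = t ^ (w.re - 1) * Real.exp (-(x.re * t)) * t := by
        rw [norm_mul, st8_norm_eq ht']
        simp [abs_of_nonneg ht'.le]
      rw [hnorm]
      have h3 : t ^ (w.re + 1 - 1) = t ^ (w.re - 1) * t := by
        rw [show w.re + 1 - 1 = (w.re - 1) + 1 by ring, Real.rpow_add ht', Real.rpow_one]
      rw [h3]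
      have h4 : Real.exp (-(x.re * t)) ≤ Real.exp (-(ε * t)) := by
        apply Real.exp_le_exp.mpr
        nlinarith
      have h5 : (0:ℝ) ≤ t ^ (w.re - 1) := Real.rpow_nonneg ht'.le _
      calc t ^ (w.re - 1) * Real.exp (-(x.re * t)) * t
          ≤ t ^ (w.re - 1) * Real.exp (-(ε * t)) * t := by
            have := mul_le_mul_of_nonneg_right (mul_le_mul_of_nonneg_left h4 h5) ht'.le
            linarith
        _ = t ^ (w.re - 1) * t * Real.exp (-(ε * t)) := by ring
    · -- bound integrable
      exact st8_real_int (by linarith) hεpos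
    · -- differentiability
      apply (ae_restrict_iff' measurableSet_Ioi).mpr
      filter_upwards with t ht
      intro x hx
      have h1 : HasDerivAt (fun z : ℂ => -(z * (t:ℂ))) (-(t:ℂ)) x := by
        simpa using ((hasDerivAt_id x).mul_const (t:ℂ)).fun_neg
      have h2 : HasDerivAt (fun z : ℂ => Complex.exp (-(z * t)))
          (Complex.exp (-(x * t)) * -(t:ℂ)) x := h1.cexp
      have h3 := h2.const_mul ((t:ℂ) ^ (w - 1))
      simpa [mul_assoc] using h3
  -- equality on positive reals
  have hreal : ∀ r : ℝ, 0 < r → F r = G r := by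
    intro r hr
    have h1 := Complex.integral_cpow_mul_exp_neg_mul_Ioi hw hr
    have h2 : F r = (1 / r : ℂ) ^ w * Complex.Gamma w := by
      rw [hFdef, ← h1]
    have harg : (↑r : ℂ).arg ≠ π := by
      rw [Complex.arg_ofReal_of_nonneg hr.le]
      exact Real.pi_ne_zero.symm
    rw [h2]
    show _ = (↑r : ℂ) ^ (-w) * Complex.Gamma w
    congr 1
    rw [one_div, Complex.inv_cpow _ _ harg, ← Complex.cpow_neg]
  -- identity theorem
  have hseq : Filter.Tendsto (fun n : ℕ => ((1 + (1:ℝ)/(n+1) : ℝ) : ℂ)) Filter.atTop (𝓝[≠] 1) := by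
    apply tendsto_nhdsWithin_of_tendsto_nhds_of_eventually_within
    · have hr : Filter.Tendsto (fun n : ℕ => (1 + (1:ℝ)/(n+1) : ℝ)) Filter.atTop (𝓝 1) := by
        have h0 := tendsto_one_div_add_atTop_nhds_zero_nat (𝕜 := ℝ)
        simpa using tendsto_const_nhds.add h0
      have h2 := (Complex.continuous_ofReal.tendsto 1).comp hr
      have h3 : ((1:ℝ):ℂ) = 1 := by norm_num
      rw [h3] at h2
      exact h2
    · filter_upwards with n
      simp only [Set.mem_compl_iff, Set.mem_singleton_iff]
      intro h
      have : (1 + (1:ℝ)/(n+1) : ℝ) = 1 := by exact_mod_cast h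
      have hpos : (0:ℝ) < 1/(n+1) := by positivity
      linarith
  have hfreq : ∃ᶠ z in 𝓝[≠] (1:ℂ), F z = G z := by
    apply hseq.frequently
    apply Filter.Frequently.of_forall
    intro n
    exact hreal _ (by positivity)
  have hb' : b ∈ U := hb
  have h1U : (1:ℂ) ∈ U := by simp [hUdef]
  exact hFa.eqOn_of_preconnected_of_frequently_eq hGa hUc h1U hfreq hb'

lemma st8_integrable_tsum {α : Type*} [MeasurableSpace α] {μ : Measure α}
    {ι : Type*} [Countable ι] {F : ι → α → ℂ}
    (hF_int : ∀ i, Integrable (F i) μ) (hF_sum : Summable fun i => ∫ a, ‖F i a‖ ∂μ) :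
    Integrable (fun a => ∑' i, F i a) μ := by
  have h0 : ∀ i, AEMeasurable (fun x => (‖F i x‖₊ : ENNReal)) μ := fun i =>
    by have := (hF_int i).aestronglyMeasurable.enorm; exact this
  have key : ∑' i, ∫⁻ a, ‖F i a‖₊ ∂μ ≠ ⊤ := by
    have heq : ∀ i : ι, ∫⁻ a, ‖F i a‖₊ ∂μ = ‖(∫ a, ‖F i a‖ ∂μ)‖₊ := by
      intro i
      rw [lintegral_coe_eq_integral (fun a => ‖F i a‖₊) (hF_int i).norm, ENNReal.coe_nnreal_eq, coe_nnnorm,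
        Real.norm_of_nonneg (integral_nonneg fun a => norm_nonneg (F i a))]
      simp only [coe_nnnorm]
    rw [funext heq, ← ENNReal.coe_tsum]
    · exact ENNReal.coe_ne_top
    · simp_rw [← NNReal.summable_coe, coe_nnnorm]
      exact hF_sum.abs
  have hhh : ∀ᵐ a ∂μ, Summable fun i => ‖F i a‖ := by
    rw [← lintegral_tsum h0] at key
    refine (ae_lt_top' (AEMeasurable.ennreal_tsum h0) key).mono fun x hx => ?_
    have := ENNReal.tsum_coe_ne_top_iff_summable_coe.mp hx.ne
    simpa [coe_nnnorm] using this
  constructor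
  · apply aestronglyMeasurable_of_tendsto_ae (Filter.atTop : Filter (Finset ι))
      (f := fun (s : Finset ι) a => ∑ i ∈ s, F i a)
      (fun s => (integrable_finset_sum s (fun i _ => hF_int i)).aestronglyMeasurable)
    filter_upwards [hhh] with a ha
    exact ha.of_norm.hasSum
  · have hb : ∫⁻ a, ‖∑' i, F i a‖₊ ∂μ ≤ ∑' i, ∫⁻ a, ‖F i a‖₊ ∂μ := by
      rw [← lintegral_tsum h0]
      apply lintegral_mono_ae
      filter_upwards [hhh] with a ha
      have ha' : Summable fun i => ‖F i a‖₊ := by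
        rw [← NNReal.summable_coe]
        simpa [coe_nnnorm] using ha
      calc (‖∑' i, F i a‖₊ : ENNReal) ≤ ((∑' i, ‖F i a‖₊ : NNReal) : ENNReal) :=
            ENNReal.coe_le_coe.mpr (nnnorm_tsum_le ha')
        _ = ∑' i, (‖F i a‖₊ : ENNReal) := ENNReal.coe_tsum ha'
    exact lt_of_le_of_lt hb (Ne.lt_top key)

theorem stmt8 (k : ℤ) (A C : ℝ) (hA : 0 ≤ A) (hC : 0 < C) (a : ℕ+ → ℂ)
    (ha : ∀ n : ℕ+, ‖a n‖ ≤ C * (n : ℝ) ^ A)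
    (f : ℂ → ℂ)
    (hf : ∀ z : ℂ, 0 < z.im →
      f z = ∑' n : ℕ+, a n * Complex.exp (2 * π * Complex.I * (n : ℂ) * z))
    (T : ℝ) (hT : 0 < T) (α : ℂ) (hα : α = -1 + Complex.I / T)
    (s : ℂ) (hs : A + 2 < s.re + ((k : ℝ) - 1) / 2) :
    IntegrableOn (fun t : ℝ => f (α * t) * (t : ℂ) ^ (s + ((k : ℂ) - 1) / 2 - 1))
      (Set.Ioi 0) ∧
    Summable (fun n : ℕ+ => ‖a n * (n : ℂ) ^ (-(s + ((k : ℂ) - 1) / 2))‖) ∧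
    ∫ t in Set.Ioi (0 : ℝ), f (α * t) * (t : ℂ) ^ (s + ((k : ℂ) - 1) / 2 - 1) =
      (2 * π : ℂ) ^ (-(s + ((k : ℂ) - 1) / 2)) *
        (-α * Complex.I) ^ (-(s + ((k : ℂ) - 1) / 2)) *
        Complex.Gamma (s + ((k : ℂ) - 1) / 2) *
        ∑' n : ℕ+, a n * (n : ℂ) ^ (-(s + ((k : ℂ) - 1) / 2)) := by
  set w : ℂ := s + ((k : ℂ) - 1) / 2 with hwdef
  have hk : ((k:ℂ) - 1)/2 = ((((k:ℝ) - 1)/2 : ℝ) : ℂ) := by push_cast; ring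
  have hwre : w.re = s.re + ((k:ℝ) - 1)/2 := by
    rw [hwdef, hk, Complex.add_re, Complex.ofReal_re]
  have hwA : A + 2 < w.re := by rw [hwre]; exact hs
  have hwpos : 0 < w.re := by linarith
  set b : ℂ := -(2 * (π:ℂ) * Complex.I * α) with hbdef
  have hT' : (T:ℂ) ≠ 0 := Complex.ofReal_ne_zero.mpr hT.ne'
  have hbeq : b = ((2*π/T : ℝ):ℂ) + ((2*π : ℝ):ℂ) * Complex.I := by
    rw [hbdef, hα]
    have hI2 : Complex.I * Complex.I = -1 := Complex.I_mul_I
    push_cast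
    field_simp
    linear_combination (-1) * Complex.I_sq
  have hbre : b.re = 2*π/T := by rw [hbeq]; simp
  have hbpos : 0 < b.re := by rw [hbre]; positivity
  have hnpos : ∀ n : ℕ+, (0:ℝ) < (n:ℝ) := fun n => by exact_mod_cast n.pos
  have hncast : ∀ n : ℕ+, ((n:ℕ+):ℂ) = (((n:ℝ)):ℂ) := fun n => by push_cast; rfl
  have hbn : ∀ n : ℕ+, 0 < (b * (n:ℂ)).re := by
    intro n
    rw [hncast n, Complex.mul_re, Complex.ofReal_re, Complex.ofReal_im]
    simpa using mul_pos hbpos (hnpos n)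
  have hbnre : ∀ n : ℕ+, (b * (n:ℂ)).re = b.re * (n:ℝ) := by
    intro n
    rw [hncast n, Complex.mul_re, Complex.ofReal_re, Complex.ofReal_im]
    simp
  have hG0 : (0:ℝ) ≤ Real.Gamma w.re := (Real.Gamma_pos_of_pos hwpos).le
  set F : ℕ+ → ℝ → ℂ := fun n t => a n * ((t:ℂ)^(w-1) * Complex.exp (-(b * (n:ℂ) * (t:ℝ))))
    with hFdef
  have hFint : ∀ n : ℕ+, Integrable (F n) ((volume : Measure ℝ).restrict (Set.Ioi 0)) :=
    fun n => (st8_cplx_int hwpos (hbn n)).const_mul (a n)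
  -- norm integrals
  have hnormint : ∀ n : ℕ+, ∫ t in Set.Ioi (0:ℝ), ‖F n t‖
      = ‖a n‖ * ((1/(b.re * (n:ℝ))) ^ w.re * Real.Gamma w.re) := by
    intro n
    have h1 : ∀ t ∈ Set.Ioi (0:ℝ), ‖F n t‖
        = ‖a n‖ * (t ^ (w.re - 1) * Real.exp (-((b.re * (n:ℝ)) * t))) := by
      intro t ht
      have ht' : (0:ℝ) < t := ht
      rw [hFdef]
      rw [norm_mul, st8_norm_eq ht', hbnre n]
    rw [setIntegral_congr_fun measurableSet_Ioi h1, integral_const_mul,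
      Real.integral_rpow_mul_exp_neg_mul_Ioi hwpos (mul_pos hbpos (hnpos n))]
  -- summable comparison
  have hbase : Summable (fun n : ℕ+ => (n:ℝ) ^ (A - w.re)) := by
    have h2 : Summable (fun n : ℕ => (n:ℝ) ^ (A - w.re)) :=
      (Real.summable_nat_rpow).mpr (by linarith)
    exact h2.comp_injective (fun m n h => PNat.coe_injective (by exact_mod_cast h))
  have hsum2 : Summable (fun n : ℕ+ => ‖a n * (n : ℂ) ^ (-w)‖) := by
    apply Summable.of_nonneg_of_le (fun n => norm_nonneg _) ?_ (hbase.mul_left C)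
    intro n
    rw [norm_mul, hncast n,
      Complex.norm_cpow_eq_rpow_re_of_pos (hnpos n)]
    have h3 : (n:ℝ) ^ (-w).re = (n:ℝ) ^ (-w.re) := by simp
    rw [h3]
    calc ‖a n‖ * (n:ℝ) ^ (-w.re) ≤ (C * (n:ℝ)^A) * (n:ℝ) ^ (-w.re) := by
          apply mul_le_mul_of_nonneg_right (ha n) (Real.rpow_nonneg (hnpos n).le _)
      _ = C * ((n:ℝ)^A * (n:ℝ) ^ (-w.re)) := by ring
      _ = C * (n:ℝ) ^ (A - w.re) := by rw [← Real.rpow_add (hnpos n)]; ring_nf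
  have hsumnorm : Summable (fun n : ℕ+ => ∫ t in Set.Ioi (0:ℝ), ‖F n t‖) := by
    simp_rw [hnormint]
    apply Summable.of_nonneg_of_le
      (fun n => by positivity)
      ?_ (hbase.mul_left (C * ((1/b.re) ^ w.re * Real.Gamma w.re)))
    intro n
    have h4 : (1/(b.re*(n:ℝ)))^w.re = (1/b.re)^w.re * (n:ℝ)^(-w.re) := by
      rw [one_div, one_div, Real.inv_rpow (by positivity), Real.inv_rpow hbpos.le,
        Real.mul_rpow hbpos.le (hnpos n).le, mul_inv, Real.rpow_neg (hnpos n).le]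
    rw [h4]
    calc ‖a n‖ * ((1/b.re)^w.re * (n:ℝ)^(-w.re) * Real.Gamma w.re)
        ≤ (C * (n:ℝ)^A) * ((1/b.re)^w.re * (n:ℝ)^(-w.re) * Real.Gamma w.re) := by
          apply mul_le_mul_of_nonneg_right (ha n)
          have := Real.rpow_nonneg (hnpos n).le (-w.re)
          positivity
      _ = C * ((1/b.re)^w.re * Real.Gamma w.re) * ((n:ℝ)^A * (n:ℝ)^(-w.re)) := by ring
      _ = C * ((1/b.re)^w.re * Real.Gamma w.re) * (n:ℝ)^(A - w.re) := by
          rw [← Real.rpow_add (hnpos n)]; ring_nf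
  -- misc facts about α
  have hαim : α.im = T⁻¹ := by
    rw [hα]
    simp [Complex.add_im, Complex.div_im, Complex.normSq_ofReal]
  have hαIeq : -α * Complex.I = ((T⁻¹:ℝ):ℂ) + Complex.I := by
    rw [hα]
    push_cast
    field_simp
    linear_combination (-1) * Complex.I_sq
  have hz : -α * Complex.I ≠ 0 := by
    rw [hαIeq]
    intro h
    have := congrArg Complex.im h
    simp at this
  -- pointwise identity
  have hptwise : ∀ t ∈ Set.Ioi (0:ℝ), f (α * (t:ℝ)) * (t:ℂ)^(w-1) = ∑' n : ℕ+, F n t := by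
    intro t ht
    have ht' : (0:ℝ) < t := ht
    have him : 0 < (α * (t:ℝ)).im := by
      rw [Complex.mul_im, hαim]
      simp only [Complex.ofReal_re, Complex.ofReal_im, mul_zero, zero_add]
      positivity
    rw [hf _ him, ← tsum_mul_right]
    apply tsum_congr
    intro n
    have harg : 2 * (π:ℂ) * Complex.I * (n:ℂ) * (α * (t:ℝ)) = -(b * (n:ℂ) * (t:ℝ)) := by
      rw [hbdef]; ring
    rw [harg, hFdef]
    ring
  have hhs := hasSum_integral_of_summable_integral_norm hFint hsumnorm
  have hint1 : IntegrableOn (fun t : ℝ => f (α * t) * (t:ℂ)^(w-1)) (Set.Ioi 0) := by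
    apply (st8_integrable_tsum hFint hsumnorm).congr
    apply (ae_restrict_iff' measurableSet_Ioi).mpr
    filter_upwards with t ht
    exact (hptwise t ht).symm
  refine ⟨hint1, hsum2, ?_⟩
  rw [setIntegral_congr_fun measurableSet_Ioi hptwise, ← hhs.tsum_eq]
  have h2π : ((2*π:ℝ):ℂ) = 2*(π:ℂ) := by push_cast; ring
  have hval : ∀ n : ℕ+, ∫ t in Set.Ioi (0:ℝ), F n t
      = (2*(π:ℂ))^(-w) * (-α*Complex.I)^(-w) * Complex.Gamma w * (a n * (n:ℂ)^(-w)) := by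
    intro n
    have h5 : b * (n:ℂ) = ((2*π:ℝ):ℂ) * ((-α*Complex.I) * ((n:ℝ):ℂ)) := by
      rw [hncast n, hbdef]
      push_cast
      ring
    have hzn : (-α*Complex.I) * ((n:ℝ):ℂ) ≠ 0 :=
      mul_ne_zero hz (by exact_mod_cast (hnpos n).ne')
    have hsplit : (b * (n:ℂ))^(-w)
        = (2*(π:ℂ))^(-w) * ((-α*Complex.I)^(-w) * (((n:ℝ):ℂ))^(-w)) := by
      rw [h5, st8_real_mul_cpow (by positivity) hzn (-w), h2π,
        mul_comm (-α*Complex.I) (((n:ℝ):ℂ)),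
        st8_real_mul_cpow (hnpos n) hz (-w)]
      ring
    show ∫ t in Set.Ioi (0:ℝ),
        a n * ((t:ℂ)^(w-1) * Complex.exp (-(b * (n:ℂ) * (t:ℝ)))) = _
    rw [integral_const_mul, st8_keyval hwpos (hbn n), hsplit, hncast n]
    ring
  calc ∑' n : ℕ+, ∫ t in Set.Ioi (0:ℝ), F n t
      = ∑' n : ℕ+, ((2*(π:ℂ))^(-w) * (-α*Complex.I)^(-w) * Complex.Gamma w)
          * (a n * (n:ℂ)^(-w)) := tsum_congr (fun n => hval n)
    _ = (2*(π:ℂ))^(-w) * (-α*Complex.I)^(-w) * Complex.Gamma w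
          * ∑' n : ℕ+, a n * (n:ℂ)^(-w) := tsum_mul_left
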